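/- Let x_1, …, x_n be pairwise distinct real numbers in [−1, 1], and let b : ℕ → ℝ satisfy b_k > 0 for every k and Σ_{k=0}^∞ b_k < ∞. Then the n×n matrix H with entries H_{ij} = Σ_{k=0}^∞ b_k (x_i x_j)^k is positive definite (in particular nonsingular). -/

import Mathlib

open Matrix

/-- **Positive definiteness of the power-series Gram matrix (scalar inputs).**
If `x₁, …, xₙ ∈ [-1,1]` are pairwise distinct and `b : ℕ → ℝ` has `b k > 0`
for all `k` and `∑ k, b k < ∞`, then the matrix
`H i j = ∑' k, b k * (x i * x j)^k` is positive definite. -/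
theorem stmt1 (n : ℕ) (x : Fin n → ℝ)
    (hx_mem : ∀ i, x i ∈ Set.Icc (-1 : ℝ) 1)
    (hx_distinct : Function.Injective x)
    (b : ℕ → ℝ) (hb_pos : ∀ k, 0 < b k) (hb_sum : Summable b) :
    (Matrix.of fun i j : Fin n => ∑' k : ℕ, b k * (x i * x j) ^ k).PosDef := by
  have habs : ∀ i, |x i| ≤ 1 := fun i => abs_le.2 ⟨(hx_mem i).1, (hx_mem i).2⟩
  have hxx : ∀ i j : Fin n, |x i * x j| ≤ 1 := by
    intro i j
    rw [abs_mul]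
    calc |x i| * |x j| ≤ 1 * 1 :=
          mul_le_mul (habs i) (habs j) (abs_nonneg _) zero_le_one
      _ = 1 := one_mul 1
  have hsumm : ∀ i j : Fin n, Summable (fun k => b k * (x i * x j) ^ k) := by
    intro i j
    apply Summable.of_abs
    apply hb_sum.of_nonneg_of_le (fun k => abs_nonneg _)
    intro k
    rw [abs_mul, abs_pow]
    calc |b k| * |x i * x j| ^ k ≤ |b k| * 1 ^ k :=
          mul_le_mul_of_nonneg_left (pow_le_pow_left₀ (abs_nonneg _) (hxx i j) k) (abs_nonneg _)
      _ = b k := by rw [one_pow, mul_one, abs_of_pos (hb_pos k)]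
  rw [Matrix.posDef_iff_dotProduct_mulVec]
  constructor
  · ext i j
    simp only [Matrix.conjTranspose_apply, Matrix.of_apply, star_trivial]
    rw [mul_comm (x j)]
  · intro c hc
    have key : star c ⬝ᵥ ((Matrix.of fun i j : Fin n => ∑' k : ℕ, b k * (x i * x j) ^ k) *ᵥ c)
        = ∑' k : ℕ, b k * (∑ i, c i * x i ^ k) ^ 2 := by
      simp only [dotProduct, mulVec, Matrix.of_apply, Pi.star_apply, star_trivial]
      have h1 : ∀ i : Fin n, c i * ∑ j, (∑' k : ℕ, b k * (x i * x j) ^ k) * c j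
          = ∑' k : ℕ, ∑ j, c i * ((b k * (x i * x j) ^ k) * c j) := by
        intro i
        rw [Finset.mul_sum]
        rw [Finset.sum_congr rfl (fun j _ => by
          rw [← tsum_mul_right, ← tsum_mul_left] :
            ∀ j ∈ Finset.univ, c i * ((∑' k : ℕ, b k * (x i * x j) ^ k) * c j)
              = ∑' k : ℕ, c i * ((b k * (x i * x j) ^ k) * c j))]
        exact (Summable.tsum_finsetSum (fun j _ =>
          (((hsumm i j).mul_right (c j)).mul_left (c i)))).symm
      rw [Finset.sum_congr rfl (fun i _ => h1 i)]
      rw [← Summable.tsum_finsetSum (fun i (_ : i ∈ Finset.univ) =>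
        summable_sum (fun j _ => (((hsumm i j).mul_right (c j)).mul_left (c i))))]
      apply tsum_congr
      intro k
      rw [pow_two, Finset.sum_mul_sum, Finset.mul_sum]
      refine Finset.sum_congr rfl fun i _ => ?_
      rw [Finset.mul_sum]
      refine Finset.sum_congr rfl fun j _ => ?_
      rw [mul_pow]
      ring
    rw [key]
    set s : ℕ → ℝ := fun k => ∑ i, c i * x i ^ k with hs
    have hsabs : ∀ k, |s k| ≤ ∑ i, |c i| := by
      intro k
      calc |s k| ≤ ∑ i, |c i * x i ^ k| := Finset.abs_sum_le_sum_abs _ _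
        _ ≤ ∑ i, |c i| := by
            refine Finset.sum_le_sum fun i _ => ?_
            rw [abs_mul, abs_pow]
            calc |c i| * |x i| ^ k ≤ |c i| * 1 ^ k :=
                  mul_le_mul_of_nonneg_left (pow_le_pow_left₀ (abs_nonneg _) (habs i) k)
                    (abs_nonneg _)
              _ = |c i| := by rw [one_pow, mul_one]
    have hg : Summable (fun k => b k * s k ^ 2) := by
      apply (hb_sum.mul_right ((∑ i, |c i|) ^ 2)).of_nonneg_of_le
      · intro k
        exact mul_nonneg (hb_pos k).le (sq_nonneg _)
      · intro k
        apply mul_le_mul_of_nonneg_left _ (hb_pos k).le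
        rw [← sq_abs]
        exact pow_le_pow_left₀ (abs_nonneg _) (hsabs k) 2
    have hex : ∃ k, s k ≠ 0 := by
      by_contra h
      push_neg at h
      have hV : (Matrix.vandermonde x)ᵀ *ᵥ c = 0 := by
        ext k
        have := h (k : ℕ)
        simp only [hs] at this
        simp only [mulVec, dotProduct, Matrix.transpose_apply, Matrix.vandermonde_apply,
          Pi.zero_apply]
        rw [Finset.sum_congr rfl (fun i _ => mul_comm (x i ^ (k : ℕ)) (c i))]
        exact this
      have hdet : ((Matrix.vandermonde x)ᵀ).det ≠ 0 := by
        rw [Matrix.det_transpose, Matrix.det_vandermonde]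
        refine Finset.prod_ne_zero_iff.mpr fun i _ => ?_
        refine Finset.prod_ne_zero_iff.mpr fun j hj => ?_
        exact sub_ne_zero.2 fun e => (Finset.mem_Ioi.1 hj).ne' (hx_distinct e)
      exact hc (Matrix.eq_zero_of_mulVec_eq_zero hdet hV)
    obtain ⟨k, hk⟩ := hex
    exact Summable.tsum_pos hg (fun k => mul_nonneg (hb_pos k).le (sq_nonneg _)) k
      (mul_pos (hb_pos k) (pow_two_pos_of_ne_zero hk))
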